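/- Let p, q ∈ 𝒫 satisfy: α^p = α^q; φ^p and φ^q agree on ℚ^(E^p ∩ E^q); and ξ^p_g = ξ^q_g for every g ∈ 𝒢^p ∩ 𝒢^q. Then p and q are compatible, i.e., there exists r ∈ 𝒫 with r ≤ p and r ≤ q. -/
import Mathlib


open Cardinal Filter Set

noncomputable section

/-- The index set: ordinals below an (infinite) cardinal `lam`. -/
abbrev Idx (lam : Cardinal) := {o : Ordinal // o < lam.ord}

/-- `G = ℚ^(λ)`, the group of finitely supported functions `λ → ℚ`. -/
abbrev G (lam : Cardinal) := Idx lam →₀ ℚ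

/-- The circle group `𝕋 = ℝ/ℤ`. -/
abbrev CircleT := AddCircle (1 : ℝ)

/-- `χ_μ`. -/
def chi (lam : Cardinal) (μ : Idx lam) : G lam := Finsupp.single μ 1

/-- An ultrafilter on `ω` is selective if every `f : ω → ω` is constant or injective
on some member of the ultrafilter. -/
def IsSelective (𝒰 : Ultrafilter ℕ) : Prop :=
  ∀ f : ℕ → ℕ, ∃ A ∈ 𝒰, Set.InjOn f A ∨ ∀ m ∈ A, ∀ n ∈ A, f m = f n

/-- `z` is the `𝒰`-limit of the sequence `x`. -/
def ULim {X : Type*} [TopologicalSpace X] (𝒰 : Ultrafilter ℕ) (x : ℕ → X) (z : X) : Prop :=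
  ∀ A ∈ nhds z, {n | x n ∈ A} ∈ 𝒰

/-- `[g]_𝒰`, the class of `g` in the ultrapower `Ult_𝒰(G)` (= the germ of `g` at `𝒰`). -/
def germ (lam : Cardinal) (𝒰 : Ultrafilter ℕ) (g : ℕ → G lam) :
    Filter.Germ (𝒰 : Filter ℕ) (G lam) := g

/-- The combined family `([g]_𝒰 : g ∈ H) ∪ ([χ⃗_μ]_𝒰 : μ ∈ λ)` in `Ult_𝒰(G)`. -/
def extFam (lam : Cardinal) (𝒰 : Ultrafilter ℕ) (H : Set (ℕ → G lam)) :
    H ⊕ Idx lam → Filter.Germ (𝒰 : Filter ℕ) (G lam) :=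
  Sum.elim (fun g => germ lam 𝒰 g) (fun μ => germ lam 𝒰 (fun _ => chi lam μ))

structure PCond (lam : Cardinal) (𝒰 : Ultrafilter ℕ) (H : Set (ℕ → G lam)) where
  E : Set (Idx lam)
  E_countable : E.Countable
  omega_subset : ∀ x : Idx lam, x.1 < Ordinal.omega0 → x ∈ E
  alpha : Ordinal
  alpha_lt : alpha < continuum.ord
  Gs : Set (ℕ → G lam)
  Gs_subset : Gs ⊆ H
  Gs_countable : Gs.Countable
  supp_mem : ∀ g ∈ Gs, ∀ n : ℕ, g n ∈ Finsupp.supported ℚ ℚ E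
  xi : Gs → Idx lam
  xi_mem : ∀ g : Gs, xi g ∈ E ∧ (xi g).1 < continuum.ord
  phi : ↥(Finsupp.supported ℚ ℚ E) →+ ({β : Ordinal // β < alpha} → CircleT)
  phi_ulim : ∀ g : Gs, ULim 𝒰 (fun n => phi ⟨g.1 n, supp_mem g.1 g.2 n⟩)
      (phi ⟨chi lam (xi g), Finsupp.single_mem_supported ℚ 1 (xi_mem g).1⟩)

structure PLe {lam : Cardinal} {𝒰 : Ultrafilter ℕ} {H : Set (ℕ → G lam)}
    (q p : PCond lam 𝒰 H) : Prop where
  E_sub : p.E ⊆ q.E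
  alpha_le : p.alpha ≤ q.alpha
  Gs_sub : p.Gs ⊆ q.Gs
  xi_eq : ∀ g : p.Gs, q.xi ⟨g.1, Gs_sub g.2⟩ = p.xi g
  phi_eq : ∀ a (ha : a ∈ Finsupp.supported ℚ ℚ p.E) (β : Ordinal) (hβ : β < p.alpha),
    q.phi ⟨a, Finsupp.supported_mono E_sub ha⟩ ⟨β, lt_of_lt_of_le hβ alpha_le⟩
      = p.phi ⟨a, ha⟩ ⟨β, hβ⟩

def PCompat {lam : Cardinal} {𝒰 : Ultrafilter ℕ} {H : Set (ℕ → G lam)}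
    (p q : PCond lam 𝒰 H) : Prop := ∃ r, PLe r p ∧ PLe r q

def IsOpenD {lam : Cardinal} {𝒰 : Ultrafilter ℕ} {H : Set (ℕ → G lam)}
    (D : Set (PCond lam 𝒰 H)) : Prop := ∀ p ∈ D, ∀ q, PLe q p → q ∈ D

def IsDenseD {lam : Cardinal} {𝒰 : Ultrafilter ℕ} {H : Set (ℕ → G lam)}
    (D : Set (PCond lam 𝒰 H)) : Prop := ∀ p, ∃ q ∈ D, PLe q p

/-- `ULim` is preserved by continuous maps. -/
lemma ulim_comp {X Y : Type*} [TopologicalSpace X] [TopologicalSpace Y]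
    (𝒰 : Ultrafilter ℕ) {x : ℕ → X} {z : X} (h : ULim 𝒰 x z) {f : X → Y}
    (hf : Continuous f) : ULim 𝒰 (fun n => f (x n)) (f z) := by
  intro A hA
  exact h (f ⁻¹' A) (hf.continuousAt.preimage_mem_nhds hA)

/-- Restriction (filtering) as an additive hom between supported-submodules. -/
def resHom {lam : Cardinal} (E F : Set (Idx lam)) (P : Idx lam → Prop) [DecidablePred P]
    (h : ∀ a : G lam, a ∈ Finsupp.supported ℚ ℚ E →
      Finsupp.filter P a ∈ Finsupp.supported ℚ ℚ F) :
    ↥(Finsupp.supported ℚ ℚ E) →+ ↥(Finsupp.supported ℚ ℚ F) where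
  toFun a := ⟨Finsupp.filter P a.1, h a.1 a.2⟩
  map_zero' := Subtype.ext (by simp [Finsupp.filter_zero])
  map_add' a b := Subtype.ext (by simp [Finsupp.filter_add])

/-- Reindexing a product of circles along an equality of ordinals. -/
def reindHom (α α' : Ordinal) (h : α' = α) :
    ({β : Ordinal // β < α} → CircleT) →+ ({β : Ordinal // β < α'} → CircleT) where
  toFun u β := u ⟨β.1, h ▸ β.2⟩
  map_zero' := rfl
  map_add' _ _ := rfl

lemma reindHom_continuous (α α' : Ordinal) (h : α' = α) :
    Continuous (reindHom α α' h) :=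
  continuous_pi fun β => continuous_apply _

/-- Two conditions with the same `α`, whose homomorphisms agree on `ℚ^(E^p ∩ E^q)`
and whose `ξ`'s agree on `𝒢^p ∩ 𝒢^q`, are compatible. -/
theorem statement12 (lam : Cardinal) (hclam : Cardinal.continuum ≤ lam)
    (𝒰 : Ultrafilter ℕ) (hsel : IsSelective 𝒰) (H : Set (ℕ → G lam))
    (hH : LinearIndependent ℚ (extFam lam 𝒰 H))
    (p q : PCond lam 𝒰 H) (halpha : p.alpha = q.alpha)
    (hphi : ∀ a (hp : a ∈ Finsupp.supported ℚ ℚ p.E) (hq : a ∈ Finsupp.supported ℚ ℚ q.E)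
      (β : Ordinal) (hβ : β < p.alpha),
      p.phi ⟨a, hp⟩ ⟨β, hβ⟩ = q.phi ⟨a, hq⟩ ⟨β, lt_of_lt_of_le hβ (le_of_eq halpha)⟩)
    (hxi : ∀ g (hp : g ∈ p.Gs) (hq : g ∈ q.Gs), p.xi ⟨g, hp⟩ = q.xi ⟨g, hq⟩) :
    PCompat p q := by
  classical
  set Er : Set (Idx lam) := p.E ∪ q.E with hEr
  -- filtering lemmas
  have hsub1 : ∀ a : G lam, a ∈ Finsupp.supported ℚ ℚ Er →
      Finsupp.filter (· ∈ p.E) a ∈ Finsupp.supported ℚ ℚ p.E := by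
    intro a _
    rw [Finsupp.mem_supported']
    intro x hx
    exact Finsupp.filter_apply_neg _ _ hx
  have hsub2 : ∀ a : G lam, a ∈ Finsupp.supported ℚ ℚ Er →
      Finsupp.filter (fun x => x ∉ p.E) a ∈ Finsupp.supported ℚ ℚ q.E := by
    intro a ha
    rw [Finsupp.mem_supported'] at ha ⊢
    intro x hx
    by_cases hp : x ∈ p.E
    · exact Finsupp.filter_apply_neg (fun x => x ∉ p.E) a (by simp [hp])
    · rw [Finsupp.filter_apply_pos (fun x => x ∉ p.E) a hp]
      exact ha x (by simp [hEr, hp, hx])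
  have hsub3 : ∀ a : G lam, a ∈ Finsupp.supported ℚ ℚ q.E →
      Finsupp.filter (· ∈ p.E) a ∈ Finsupp.supported ℚ ℚ q.E := by
    intro a ha
    rw [Finsupp.mem_supported'] at ha ⊢
    intro x hx
    by_cases hp : x ∈ p.E
    · rw [Finsupp.filter_apply_pos _ _ hp]; exact ha x hx
    · exact Finsupp.filter_apply_neg _ _ hp
  have hself : ∀ a : G lam, a ∈ Finsupp.supported ℚ ℚ p.E →
      Finsupp.filter (· ∈ p.E) a = a := by
    intro a ha
    rw [Finsupp.mem_supported'] at ha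
    ext x
    by_cases hp : x ∈ p.E
    · rw [Finsupp.filter_apply_pos _ _ hp]
    · rw [Finsupp.filter_apply_neg _ _ hp, ha x hp]
  have hzero : ∀ a : G lam, a ∈ Finsupp.supported ℚ ℚ p.E →
      Finsupp.filter (fun x => x ∉ p.E) a = 0 := by
    intro a ha
    rw [Finsupp.mem_supported'] at ha
    ext x
    by_cases hp : x ∈ p.E
    · rw [Finsupp.filter_apply_neg (fun x => x ∉ p.E) a (by simp [hp])]; simp
    · rw [Finsupp.filter_apply_pos (fun x => x ∉ p.E) a hp, ha x hp]; simp
  have hpsub : p.E ⊆ Er := subset_union_left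
  have hqsub : q.E ⊆ Er := subset_union_right
  -- the combined homomorphism
  let res1 := resHom Er p.E (· ∈ p.E) hsub1
  let res2 := resHom Er q.E (fun x => x ∉ p.E) hsub2
  let reind := reindHom q.alpha p.alpha halpha
  let Φ : ↥(Finsupp.supported ℚ ℚ Er) →+ ({β : Ordinal // β < p.alpha} → CircleT) :=
    (p.phi.comp res1) + ((reind.comp q.phi).comp res2)
  have hΦp : ∀ a (ha : a ∈ Finsupp.supported ℚ ℚ p.E) (hb : a ∈ Finsupp.supported ℚ ℚ Er),
      Φ ⟨a, hb⟩ = p.phi ⟨a, ha⟩ := by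
    intro a ha hb
    show p.phi (res1 ⟨a, hb⟩) + reind (q.phi (res2 ⟨a, hb⟩)) = p.phi ⟨a, ha⟩
    have h1 : res1 ⟨a, hb⟩ = ⟨a, ha⟩ := Subtype.ext (hself a ha)
    have h2 : res2 ⟨a, hb⟩ = 0 := Subtype.ext (hzero a ha)
    rw [h1, h2, map_zero, map_zero, add_zero]
  have hΦq : ∀ a (ha : a ∈ Finsupp.supported ℚ ℚ q.E) (hb : a ∈ Finsupp.supported ℚ ℚ Er),
      Φ ⟨a, hb⟩ = reind (q.phi ⟨a, ha⟩) := by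
    intro a ha hb
    show p.phi (res1 ⟨a, hb⟩) + reind (q.phi (res2 ⟨a, hb⟩)) = reind (q.phi ⟨a, ha⟩)
    funext β
    have hmix := hphi (Finsupp.filter (· ∈ p.E) a) (hsub1 a hb) (hsub3 a ha) β.1 β.2
    have hsum : (⟨Finsupp.filter (· ∈ p.E) a, hsub3 a ha⟩ : ↥(Finsupp.supported ℚ ℚ q.E)) +
        ⟨Finsupp.filter (fun x => x ∉ p.E) a, hsub2 a hb⟩ = ⟨a, ha⟩ :=
      Subtype.ext (Finsupp.filter_pos_add_filter_neg a (· ∈ p.E))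
    calc p.phi (res1 ⟨a, hb⟩) β + reind (q.phi (res2 ⟨a, hb⟩)) β
        = q.phi ⟨Finsupp.filter (· ∈ p.E) a, hsub3 a ha⟩ ⟨β.1, halpha ▸ β.2⟩ +
          q.phi ⟨Finsupp.filter (fun x => x ∉ p.E) a, hsub2 a hb⟩ ⟨β.1, halpha ▸ β.2⟩ := by
          exact congrArg (fun t => t + reind (q.phi (res2 ⟨a, hb⟩)) β) hmix
      _ = q.phi ⟨a, ha⟩ ⟨β.1, halpha ▸ β.2⟩ := by
          rw [show q.phi ⟨Finsupp.filter (· ∈ p.E) a, hsub3 a ha⟩ ⟨β.1, halpha ▸ β.2⟩ +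
              q.phi ⟨Finsupp.filter (fun x => x ∉ p.E) a, hsub2 a hb⟩ ⟨β.1, halpha ▸ β.2⟩ =
              (q.phi (⟨Finsupp.filter (· ∈ p.E) a, hsub3 a ha⟩ +
                ⟨Finsupp.filter (fun x => x ∉ p.E) a, hsub2 a hb⟩)) ⟨β.1, halpha ▸ β.2⟩ by
            rw [map_add]; rfl, hsum]
      _ = reind (q.phi ⟨a, ha⟩) β := rfl
  -- membership of supports of the g's
  have hsupp : ∀ g ∈ p.Gs ∪ q.Gs, ∀ n : ℕ, g n ∈ Finsupp.supported ℚ ℚ Er := by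
    intro g hg n
    rcases hg with hg | hg
    · exact Finsupp.supported_mono hpsub (p.supp_mem g hg n)
    · exact Finsupp.supported_mono hqsub (q.supp_mem g hg n)
  -- build the common extension
  refine ⟨{
      E := Er
      E_countable := p.E_countable.union q.E_countable
      omega_subset := fun x hx => hpsub (p.omega_subset x hx)
      alpha := p.alpha
      alpha_lt := p.alpha_lt
      Gs := p.Gs ∪ q.Gs
      Gs_subset := union_subset p.Gs_subset q.Gs_subset
      Gs_countable := p.Gs_countable.union q.Gs_countable
      supp_mem := hsupp
      xi := fun g => if h : g.1 ∈ p.Gs then p.xi ⟨g.1, h⟩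
        else q.xi ⟨g.1, g.2.resolve_left h⟩
      xi_mem := ?_
      phi := Φ
      phi_ulim := ?_ }, ?_, ?_⟩
  · -- xi_mem
    rintro ⟨g, hg⟩
    by_cases h : g ∈ p.Gs
    · simp only [dif_pos h]
      exact ⟨hpsub (p.xi_mem ⟨g, h⟩).1, (p.xi_mem ⟨g, h⟩).2⟩
    · simp only [dif_neg h]
      exact ⟨hqsub (q.xi_mem ⟨g, hg.resolve_left h⟩).1, (q.xi_mem ⟨g, hg.resolve_left h⟩).2⟩
  · -- phi_ulim
    rintro ⟨g, hg⟩
    by_cases h : g ∈ p.Gs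
    · simp only [dif_pos h]
      have e1 : (fun n => Φ ⟨g n, hsupp g hg n⟩) =
          (fun n => p.phi ⟨g n, p.supp_mem g h n⟩) :=
        funext fun n => hΦp (g n) (p.supp_mem g h n) (hsupp g hg n)
      have e2 : Φ ⟨chi lam (p.xi ⟨g, h⟩), Finsupp.single_mem_supported ℚ 1
            (hpsub (p.xi_mem ⟨g, h⟩).1)⟩ =
          p.phi ⟨chi lam (p.xi ⟨g, h⟩), Finsupp.single_mem_supported ℚ 1 (p.xi_mem ⟨g, h⟩).1⟩ :=
        hΦp _ (Finsupp.single_mem_supported ℚ 1 (p.xi_mem ⟨g, h⟩).1) _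
      rw [show (fun n => Φ ⟨g n, hsupp g hg n⟩) = _ from e1, e2]
      exact p.phi_ulim ⟨g, h⟩
    · have hq2 : g ∈ q.Gs := hg.resolve_left h
      simp only [dif_neg h]
      have e1 : (fun n => Φ ⟨g n, hsupp g hg n⟩) =
          (fun n => reind (q.phi ⟨g n, q.supp_mem g hq2 n⟩)) :=
        funext fun n => hΦq (g n) (q.supp_mem g hq2 n) (hsupp g hg n)
      have e2 : Φ ⟨chi lam (q.xi ⟨g, hq2⟩), Finsupp.single_mem_supported ℚ 1
            (hqsub (q.xi_mem ⟨g, hq2⟩).1)⟩ =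
          reind (q.phi ⟨chi lam (q.xi ⟨g, hq2⟩),
            Finsupp.single_mem_supported ℚ 1 (q.xi_mem ⟨g, hq2⟩).1⟩) :=
        hΦq _ (Finsupp.single_mem_supported ℚ 1 (q.xi_mem ⟨g, hq2⟩).1) _
      rw [show (fun n => Φ ⟨g n, hsupp g hg n⟩) = _ from e1, e2]
      exact ulim_comp 𝒰 (q.phi_ulim ⟨g, hq2⟩) (reindHom_continuous _ _ halpha)
  · -- r ≤ p
    refine ⟨hpsub, le_refl _, subset_union_left, ?_, ?_⟩
    · intro g
      exact dif_pos g.2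
    · intro a ha β hβ
      exact congrFun (hΦp a ha _) _
  · -- r ≤ q
    refine ⟨hqsub, le_of_eq halpha.symm, subset_union_right, ?_, ?_⟩
    · rintro ⟨g, hg⟩
      by_cases h : g ∈ p.Gs
      · simpa only [dif_pos h] using hxi g h hg
      · exact dif_neg h
    · intro a ha β hβ
      exact congrFun (hΦq a ha _) _
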